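/- Let A be a C-hyperideal of a commutative multiplicative hyperring G and S an MCS with A ∩ S = ∅. Then the following are equivalent: (i) A is a quasi S-primary hyperideal of G and there exists r ∈ S such that for every a ∈ G, r∘a² ⊆ A implies r∘a ⊆ A; (ii) A is an S-prime hyperideal of G; (iii) A is an S-primary hyperideal of G and there exists r ∈ S such that for every a ∈ G, r∘a² ⊆ A implies r∘a ⊆ A. -/

import Mathlib

open Set

/-- A commutative multiplicative hyperring: a commutative additive group with a
commutative, associative hyperoperation `hmul` satisfying `(-a)∘b = -(a∘b)`,
weak distributivity, and having an identity element `e` with `a ∈ e∘a`. -/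
class MulHyperring (G : Type*) extends AddCommGroup G where
  hmul : G → G → Set G
  hmul_nonempty : ∀ a b : G, (hmul a b).Nonempty
  hmul_comm : ∀ a b : G, hmul a b = hmul b a
  hmul_assoc : ∀ a b c : G, (⋃ x ∈ hmul a b, hmul x c) = ⋃ x ∈ hmul b c, hmul a x
  neg_hmul : ∀ a b : G, hmul (-a) b = (fun x => -x) '' (hmul a b)
  hmul_add : ∀ a b c : G,
    hmul a (b + c) ⊆ {x | ∃ u ∈ hmul a b, ∃ v ∈ hmul a c, x = u + v}
  e : G
  e_mem : ∀ a : G, a ∈ hmul e a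

namespace MulHyperring

variable {G : Type*} [MulHyperring G]

/-- Hyperproduct of an element with a set: `a ∘ B = ⋃ b ∈ B, a ∘ b`. -/
def smulSet (a : G) (B : Set G) : Set G := ⋃ b ∈ B, hmul a b

/-- Hyperproduct of two sets. -/
def setMul (A B : Set G) : Set G := ⋃ a ∈ A, ⋃ b ∈ B, hmul a b

/-- Hyperproduct `a₁ ∘ a₂ ∘ ⋯ ∘ aₙ` of a (nonempty) list of elements. -/
def hProd : List G → Set G
  | [] => ∅
  | [a] => {a}
  | a :: b :: l => smulSet a (hProd (b :: l))

/-- `aⁿ` as a hyperproduct. -/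
def hPow (a : G) (n : ℕ) : Set G := hProd (List.replicate n a)

/-- `A` is a hyperideal of `G`. -/
def IsHyperideal (A : Set G) : Prop :=
  A.Nonempty ∧ (∀ x ∈ A, ∀ y ∈ A, x - y ∈ A) ∧ ∀ r : G, ∀ x ∈ A, hmul r x ⊆ A

/-- `A` is a `C`-hyperideal: any finite hyperproduct meeting `A` is contained in `A`. -/
def IsCHyperideal (A : Set G) : Prop :=
  IsHyperideal A ∧ ∀ l : List G, l ≠ [] → (hProd l ∩ A).Nonempty → hProd l ⊆ A

/-- The radical of a (C-)hyperideal: `{a | aⁿ ⊆ A for some n ≥ 1}`. -/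
def rad (A : Set G) : Set G := {a | ∃ n : ℕ, 1 ≤ n ∧ hPow a n ⊆ A}

/-- The hyperideal generated by a set. -/
def idealGen (X : Set G) : Set G := ⋂₀ {A | IsHyperideal A ∧ X ⊆ A}

/-- The hyperideal product of two hyperideals. -/
def idealMul (A B : Set G) : Set G := idealGen (setMul A B)

/-- Multiplicative closed subset. -/
def IsMCS (S : Set G) : Prop :=
  e ∈ S ∧ ∀ s₁ ∈ S, ∀ s₂ ∈ S, (hmul s₁ s₂ ∩ S).Nonempty

/-- Prime hyperideal. -/
def IsPrime (P : Set G) : Prop :=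
  IsHyperideal P ∧ P ≠ univ ∧ ∀ x y : G, hmul x y ⊆ P → x ∈ P ∨ y ∈ P

/-- `S`-prime hyperideal. -/
def IsSPrime (S A : Set G) : Prop :=
  IsHyperideal A ∧ A ∩ S = ∅ ∧
    ∃ t ∈ S, ∀ u v : G, hmul u v ⊆ A → hmul t u ⊆ A ∨ hmul t v ⊆ A

/-- `S`-primary hyperideal. -/
def IsSPrimary (S A : Set G) : Prop :=
  IsHyperideal A ∧ A ∩ S = ∅ ∧
    ∃ t ∈ S, ∀ u v : G, hmul u v ⊆ A → hmul t u ⊆ A ∨ hmul t v ⊆ rad A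

/-- Quasi `S`-primary hyperideal. -/
def IsQuasiSPrimary (S A : Set G) : Prop :=
  IsHyperideal A ∧ A ∩ S = ∅ ∧
    ∃ t ∈ S, ∀ u v : G, hmul u v ⊆ A → hmul t u ⊆ rad A ∨ hmul t v ⊆ rad A

/-- Weakly quasi `S`-primary hyperideal. -/
def IsWeaklyQuasiSPrimary (S A : Set G) : Prop :=
  IsHyperideal A ∧ A ∩ S = ∅ ∧
    ∃ t ∈ S, ∀ u v : G, 0 ∉ hmul u v → hmul u v ⊆ A →
      hmul t u ⊆ rad A ∨ hmul t v ⊆ rad A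

/-- Strongly quasi `S`-primary hyperideal. -/
def IsStronglyQuasiSPrimary (S A : Set G) : Prop :=
  IsHyperideal A ∧ A ∩ S = ∅ ∧
    ∃ t ∈ S, ∀ u v : G, hmul u v ⊆ A →
      smulSet t (hPow u 2) ⊆ A ∨ hmul t v ⊆ rad A

/-- The residual `(B : x) = {y | y ∘ x ⊆ B}`. -/
def colon (B : Set G) (x : G) : Set G := {y | hmul y x ⊆ B}

end MulHyperring

namespace MulHyperring

variable {G : Type*} [MulHyperring G]

lemma smulSet_mono {a : G} {B C : Set G} (h : B ⊆ C) : smulSet a B ⊆ smulSet a C :=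
  Set.biUnion_mono h (fun _ _ => le_rfl)

lemma hmul_subset_smulSet {a b : G} {B : Set G} (hb : b ∈ B) : hmul a b ⊆ smulSet a B :=
  Set.subset_biUnion_of_mem hb

lemma mem_smulSet {a z : G} {B : Set G} : z ∈ smulSet a B ↔ ∃ b ∈ B, z ∈ hmul a b := by
  simp [smulSet]

lemma smulSet_singleton (a b : G) : smulSet a {b} = hmul a b := by simp [smulSet]

lemma smulSet_hmul_left (a b c : G) : smulSet a (hmul b c) = ⋃ x ∈ hmul a b, hmul x c :=
  (hmul_assoc a b c).symm

lemma smulSet_hmul_swap (a b c : G) : smulSet a (hmul b c) = smulSet b (hmul a c) := by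
  rw [smulSet_hmul_left, smulSet_hmul_left, hmul_comm a b]

lemma iUnion_smulSet (a b : G) (C : Set G) :
    (⋃ x ∈ hmul a b, smulSet x C) = smulSet a (smulSet b C) := by
  ext z
  simp only [Set.mem_iUnion, mem_smulSet, exists_prop]
  constructor
  · rintro ⟨x, hx, c, hc, hz⟩
    have h := (hmul_assoc a b c) ▸ (rfl : (⋃ x ∈ hmul a b, hmul x c) = _)
    have hz' : z ∈ ⋃ x ∈ hmul a b, hmul x c := Set.mem_biUnion hx hz
    rw [hmul_assoc a b c] at hz'
    obtain ⟨y, hy, hzy⟩ := Set.mem_iUnion₂.mp hz'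
    exact ⟨y, ⟨c, hc, hy⟩, hzy⟩
  · rintro ⟨y, ⟨c, hc, hy⟩, hz⟩
    have hz' : z ∈ ⋃ y ∈ hmul b c, hmul a y := Set.mem_biUnion hy hz
    rw [← hmul_assoc a b c] at hz'
    obtain ⟨x, hx, hzx⟩ := Set.mem_iUnion₂.mp hz'
    exact ⟨x, hx, c, hc, hzx⟩

lemma smulSet_biUnion (a : G) {ι : Type*} (T : Set ι) (B : ι → Set G) :
    smulSet a (⋃ i ∈ T, B i) = ⋃ i ∈ T, smulSet a (B i) := by
  ext z
  simp only [mem_smulSet, Set.mem_iUnion, exists_prop]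
  constructor
  · rintro ⟨b, ⟨i, hi, hb⟩, hz⟩
    exact ⟨i, hi, b, hb, hz⟩
  · rintro ⟨i, hi, b, hb, hz⟩
    exact ⟨b, ⟨i, hi, hb⟩, hz⟩

lemma hProd_cons (a : G) (l : List G) (hl : l ≠ []) :
    hProd (a :: l) = smulSet a (hProd l) := by
  cases l with
  | nil => simp at hl
  | cons b m => rfl

lemma hProd_append (l₁ l₂ : List G) (h₁ : l₁ ≠ []) (h₂ : l₂ ≠ []) :
    hProd (l₁ ++ l₂) = ⋃ x ∈ hProd l₁, smulSet x (hProd l₂) := by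
  induction l₁ with
  | nil => simp at h₁
  | cons a l ih =>
    cases l with
    | nil =>
      have : hProd ([a] ++ l₂) = smulSet a (hProd l₂) := hProd_cons a l₂ h₂
      rw [this]
      simp [hProd]
    | cons b m =>
      have hbm : (b :: m : List G) ≠ [] := by simp
      have step : hProd ((a :: b :: m) ++ l₂) = smulSet a (hProd ((b :: m) ++ l₂)) := by
        rw [List.cons_append]
        exact hProd_cons a _ (by simp)
      rw [step, ih hbm, smulSet_biUnion]
      have hcons : hProd (a :: b :: m) = smulSet a (hProd (b :: m)) := rfl
      rw [hcons]
      ext z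
      constructor
      · intro hz
        obtain ⟨x, hx, hz⟩ := Set.mem_iUnion₂.mp hz
        rw [← iUnion_smulSet] at hz
        obtain ⟨y, hy, hz⟩ := Set.mem_iUnion₂.mp hz
        exact Set.mem_biUnion (mem_smulSet.mpr ⟨x, hx, hy⟩) hz
      · intro hz
        obtain ⟨y, hy, hz⟩ := Set.mem_iUnion₂.mp hz
        obtain ⟨x, hx, hy⟩ := mem_smulSet.mp hy
        refine Set.mem_biUnion hx ?_
        rw [← iUnion_smulSet]
        exact Set.mem_biUnion hy hz

lemma hPow_one (a : G) : hPow a 1 = {a} := rfl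

lemma hPow_two (a : G) : hPow a 2 = hmul a a := by
  show hProd [a, a] = hmul a a
  show smulSet a (hProd [a]) = hmul a a
  show smulSet a {a} = hmul a a
  exact smulSet_singleton a a

lemma hPow_succ (a : G) (n : ℕ) (hn : 1 ≤ n) :
    hPow a (n + 1) = smulSet a (hPow a n) := by
  unfold hPow
  rw [List.replicate_succ]
  exact hProd_cons a _ (by
    cases n with
    | zero => omega
    | succ m => simp [List.replicate_succ])

lemma hPow_add (a : G) (m n : ℕ) (hm : 1 ≤ m) (hn : 1 ≤ n) :
    hPow a (m + n) = ⋃ x ∈ hPow a m, smulSet x (hPow a n) := by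
  unfold hPow
  rw [List.replicate_add]
  exact hProd_append _ _ (by cases m with | zero => omega | succ k => simp [List.replicate_succ])
    (by cases n with | zero => omega | succ k => simp [List.replicate_succ])

lemma ideal_smulSet {A : Set G} (hA : IsHyperideal A) {B : Set G} (hB : B ⊆ A) (r : G) :
    smulSet r B ⊆ A := by
  intro z hz
  obtain ⟨b, hb, hz⟩ := mem_smulSet.mp hz
  exact hA.2.2 r b (hB hb) hz

lemma hPow_subset_of_le {A : Set G} (hA : IsHyperideal A) {a : G} {n : ℕ} (hn : 1 ≤ n)
    (h : hPow a n ⊆ A) : ∀ m, n ≤ m → hPow a m ⊆ A := by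
  intro m hm
  induction m with
  | zero => omega
  | succ k ih =>
    rcases Nat.lt_or_ge n (k + 1) with hlt | hge
    · have hk : n ≤ k := by omega
      have hk1 : 1 ≤ k := le_trans hn hk
      rw [hPow_succ a k hk1]
      exact ideal_smulSet hA (ih hk) a
    · have : n = k + 1 := by omega
      rwa [← this]

lemma subset_rad (A : Set G) : A ⊆ rad A := by
  intro a ha
  exact ⟨1, le_rfl, by rw [hPow_one]; exact Set.singleton_subset_iff.mpr ha⟩

lemma rad_smul {A : Set G} (hA : IsHyperideal A) {r : G}
    (hr : ∀ a : G, smulSet r (hPow a 2) ⊆ A → hmul r a ⊆ A)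
    {y : G} (hy : y ∈ rad A) : hmul r y ⊆ A := by
  obtain ⟨n, hn1, hn⟩ := hy
  have h2 : hPow y (2 ^ n) ⊆ A :=
    hPow_subset_of_le hA hn1 hn (2 ^ n) (Nat.le_of_lt (Nat.lt_two_pow_self (n := n)))
  have start : smulSet r (hPow y (2 ^ n)) ⊆ A := ideal_smulSet hA h2 r
  suffices H : ∀ k, smulSet r (hPow y (2 ^ k)) ⊆ A → hmul r y ⊆ A from H n start
  intro k
  induction k with
  | zero =>
    intro h
    rw [pow_zero, hPow_one, smulSet_singleton] at h
    exact h
  | succ k ih =>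
    intro h
    apply ih
    intro z hz
    obtain ⟨x, hx, hz⟩ := mem_smulSet.mp hz
    have hxx : hmul x x ⊆ hPow y (2 ^ (k + 1)) := by
      have h2k : (2 : ℕ) ^ (k + 1) = 2 ^ k + 2 ^ k := by ring
      rw [h2k, hPow_add y _ _ (Nat.one_le_two_pow) (Nat.one_le_two_pow)]
      exact (hmul_subset_smulSet hx).trans
        (Set.subset_biUnion_of_mem (u := fun w => smulSet w (hPow y (2 ^ k))) hx)
    have hrx : hmul r x ⊆ A := by
      apply hr x
      rw [hPow_two]
      exact (smulSet_mono hxx).trans h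
    exact hrx hz

lemma sPrime_imp_sq {A S : Set G} (hA : IsCHyperideal A) (hS : IsMCS S)
    (hp : IsSPrime S A) :
    ∃ r ∈ S, ∀ a : G, smulSet r (hPow a 2) ⊆ A → hmul r a ⊆ A := by
  obtain ⟨hI, hd, t, htS, ht⟩ := hp
  obtain ⟨s, hs⟩ := hS.2 t htS t htS
  refine ⟨s, hs.2, fun a ha => ?_⟩
  rw [hPow_two] at ha
  have h4 : hProd [t, t, a, a] = smulSet t (smulSet t (hmul a a)) := by
    show smulSet t (smulSet t (smulSet a {a})) = _
    rw [smulSet_singleton]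
  have hsub : smulSet s (hmul a a) ⊆ hProd [t, t, a, a] := by
    rw [h4, ← iUnion_smulSet]
    exact Set.subset_biUnion_of_mem (u := fun w => smulSet w (hmul a a)) hs.1
  obtain ⟨w, hw⟩ := hmul_nonempty a a
  obtain ⟨p, hp⟩ := hmul_nonempty s w
  have hpmem : p ∈ smulSet s (hmul a a) := mem_smulSet.mpr ⟨w, hw, hp⟩
  have hAll : hProd [t, t, a, a] ⊆ A :=
    hA.2 [t, t, a, a] (by simp) ⟨p, hsub hpmem, ha hpmem⟩
  have hUnion : (⋃ x ∈ hmul t a, smulSet x (hmul t a)) = smulSet t (smulSet t (hmul a a)) := by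
    rw [iUnion_smulSet t a (hmul t a), smulSet_hmul_swap a t a]
  have key : ∀ x ∈ hmul t a, hmul x x ⊆ A := by
    intro x hx
    refine ((hmul_subset_smulSet hx).trans ?_).trans hAll
    rw [h4, ← hUnion]
    exact Set.subset_biUnion_of_mem (u := fun w => smulSet w (hmul t a)) hx
  have h6 : smulSet t (hmul t a) ⊆ A := by
    intro z hz
    obtain ⟨x, hx, hz⟩ := mem_smulSet.mp hz
    exact ((ht x x (key x hx)).elim id id) hz
  rw [smulSet_hmul_left] at h6
  exact (Set.subset_biUnion_of_mem (u := fun w => hmul w a) hs.1).trans h6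

end MulHyperring

open MulHyperring in
theorem quasiSPrimary_sq_iff_sPrime_iff_sPrimary_sq {G : Type*} [MulHyperring G] (A S : Set G) (hA : IsCHyperideal A)
    (hS : IsMCS S) (hAS : A ∩ S = ∅) :
    ((IsQuasiSPrimary S A ∧ ∃ r ∈ S, ∀ a : G, smulSet r (hPow a 2) ⊆ A → hmul r a ⊆ A) ↔
      IsSPrime S A) ∧
    (IsSPrime S A ↔
      (IsSPrimary S A ∧ ∃ r ∈ S, ∀ a : G, smulSet r (hPow a 2) ⊆ A → hmul r a ⊆ A)) := by
  have main : ∀ (t r : G), (∀ a : G, smulSet r (hPow a 2) ⊆ A → hmul r a ⊆ A) →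
      ∀ s ∈ hmul r t, ∀ w : G, hmul t w ⊆ rad A → hmul s w ⊆ A := by
    intro t r hr s hs w hw
    have h1 : smulSet r (hmul t w) ⊆ A := by
      intro z hz
      obtain ⟨x, hx, hz⟩ := mem_smulSet.mp hz
      exact rad_smul hA.1 hr (hw hx) hz
    rw [smulSet_hmul_left] at h1
    exact (Set.subset_biUnion_of_mem (u := fun x => hmul x w) hs).trans h1
  constructor
  · constructor
    · rintro ⟨⟨hI, hd, t, htS, ht⟩, r, hrS, hr⟩
      obtain ⟨s, hsrt, hsS⟩ := hS.2 r hrS t htS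
      refine ⟨hI, hd, s, hsS, fun u v huv => ?_⟩
      exact (ht u v huv).imp (main t r hr s hsrt u) (main t r hr s hsrt v)
    · intro hp
      obtain ⟨t, htS, ht⟩ := hp.2.2
      exact ⟨⟨hp.1, hp.2.1, t, htS, fun u v h =>
        (ht u v h).imp (·.trans (subset_rad A)) (·.trans (subset_rad A))⟩,
        sPrime_imp_sq hA hS hp⟩
  · constructor
    · intro hp
      obtain ⟨t, htS, ht⟩ := hp.2.2
      exact ⟨⟨hp.1, hp.2.1, t, htS, fun u v h =>
        (ht u v h).imp id (·.trans (subset_rad A))⟩,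
        sPrime_imp_sq hA hS hp⟩
    · rintro ⟨⟨hI, hd, t, htS, ht⟩, r, hrS, hr⟩
      obtain ⟨s, hsrt, hsS⟩ := hS.2 r hrS t htS
      refine ⟨hI, hd, s, hsS, fun u v huv => ?_⟩
      rcases ht u v huv with h | h
      · left
        have h1 : smulSet r (hmul t u) ⊆ A := ideal_smulSet hI h r
        rw [smulSet_hmul_left] at h1
        exact (Set.subset_biUnion_of_mem (u := fun x => hmul x u) hsrt).trans h1
      · exact Or.inr (main t r hr s hsrt v h)
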